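/- Let Δ₃ = {(x,y,z) ∈ ℝ³ : x ≥ 0, y ≥ 0, z ≥ 0, x + y + z ≤ 1} be the standard 3-simplex with barycentric coordinates λ₁ = x, λ₂ = y, λ₃ = z, λ₄ = 1 − x − y − z, let γ > 0, let Ω^{(γ)} = (Γ(4γ)/Γ(γ)⁴)(λ₁λ₂λ₃λ₄)^{γ−1}, and set ψ₁₂ = λ₁λ₂ + h_γ − k_γ(λ₁ + λ₂) with h_γ = γ²/(2(2γ+1)(4γ+1)) and k_γ = γ/(2(2γ+1)). Then the following moment identities hold: ∫_{Δ₃} ψ₁₂ · λ₁λ₂ · Ω^{(γ)} dx = γ(5γ²+5γ+1)/(8(1+2γ)²(1+4γ)²(3+4γ)); ∫_{Δ₃} ψ₁₂ · λ₃λ₄ · Ω^{(γ)} dx = γ³/(8(1+2γ)²(1+4γ)²(3+4γ)); and ∫_{Δ₃} ψ₁₂ · λ₁λ₃ · Ω^{(γ)} dx = −γ²/(16(1+2γ)(1+4γ)²(3+4γ)). -/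

import Mathlib

open MeasureTheory

noncomputable section

/-- The standard 3-simplex in `ℝ³`. -/
def simplex3 : Set (Fin 3 → ℝ) :=
  {x | 0 ≤ x 0 ∧ 0 ≤ x 1 ∧ 0 ≤ x 2 ∧ x 0 + x 1 + x 2 ≤ 1}

/-- Barycentric coordinates on the standard 3-simplex. -/
def lam : Fin 4 → (Fin 3 → ℝ) → ℝ :=
  ![fun x => x 0, fun x => x 1, fun x => x 2, fun x => 1 - x 0 - x 1 - x 2]

/-- The symmetric Dirichlet density of parameter `γ` on the standard 3-simplex. -/
def dirichlet3 (γ : ℝ) : (Fin 3 → ℝ) → ℝ := fun x =>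
  Real.Gamma (4 * γ) / (Real.Gamma γ) ^ 4 * (lam 0 x * lam 1 x * lam 2 x * lam 3 x) ^ (γ - 1)

/-- The volumetric quadratic polynomial `ψ₁₂ = λ₁λ₂ + h_γ − k_γ(λ₁+λ₂)`. -/
def psi12 (γ : ℝ) : (Fin 3 → ℝ) → ℝ := fun x =>
  lam 0 x * lam 1 x + γ ^ 2 / (2 * (2 * γ + 1) * (4 * γ + 1)) -
    γ / (2 * (2 * γ + 1)) * (lam 0 x + lam 1 x)

open Set Real
open scoped ENNReal


lemma betaR_complex_eq {p q : ℝ} (hp : 0 < p) (hq : 0 < q) :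
    ∀ x ∈ Ioc (0:ℝ) 1,
      ((x : ℂ) ^ ((p:ℂ) - 1) * (1 - (x:ℂ)) ^ ((q:ℂ) - 1)) =
        ((x ^ (p-1) * (1-x) ^ (q-1) : ℝ) : ℂ) := by
  intro x hx
  have h1 : ((x ^ (p-1) : ℝ) : ℂ) = (x:ℂ) ^ ((p:ℂ) - 1) := by
    rw [Complex.ofReal_cpow hx.1.le]; push_cast; ring_nf
  have h2 : (((1-x) ^ (q-1) : ℝ) : ℂ) = (1 - (x:ℂ)) ^ ((q:ℂ) - 1) := by
    rw [Complex.ofReal_cpow (by linarith [hx.2] : (0:ℝ) ≤ 1 - x)]; push_cast; ring_nf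
  push_cast
  rw [h1, h2]

lemma betaR_integrableOn {p q : ℝ} (hp : 0 < p) (hq : 0 < q) :
    IntegrableOn (fun x : ℝ => x ^ (p-1) * (1-x) ^ (q-1)) (Ioc 0 1) := by
  have hC : IntervalIntegrable
      (fun x : ℝ => (x : ℂ) ^ ((p:ℂ)-1) * (1-(x:ℂ)) ^ ((q:ℂ)-1)) volume 0 1 :=
    Complex.betaIntegral_convergent (by simpa using hp) (by simpa using hq)
  rw [intervalIntegrable_iff_integrableOn_Ioc_of_le zero_le_one] at hC
  have hre := hC.re
  refine hre.congr ?_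
  filter_upwards [ae_restrict_mem measurableSet_Ioc] with x hx
  rw [betaR_complex_eq hp hq x hx]
  simp

lemma betaR_value {p q : ℝ} (hp : 0 < p) (hq : 0 < q) :
    ∫ x in Ioc (0:ℝ) 1, x ^ (p-1) * (1-x) ^ (q-1)
      = Real.Gamma p * Real.Gamma q / Real.Gamma (p+q) := by
  have key := Complex.Gamma_mul_Gamma_eq_betaIntegral
    (s := (p:ℂ)) (t := (q:ℂ)) (by simpa using hp) (by simpa using hq)
  have hbeta : Complex.betaIntegral p q
      = ((∫ x in Ioc (0:ℝ) 1, x ^ (p-1) * (1-x) ^ (q-1) : ℝ) : ℂ) := by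
    rw [Complex.betaIntegral, intervalIntegral.integral_of_le zero_le_one]
    rw [setIntegral_congr_fun measurableSet_Ioc (fun x hx => betaR_complex_eq hp hq x hx)]
    exact integral_ofReal
  rw [hbeta, ← Complex.ofReal_add, Complex.Gamma_ofReal, Complex.Gamma_ofReal,
    Complex.Gamma_ofReal, ← Complex.ofReal_mul, ← Complex.ofReal_mul] at key
  have := Complex.ofReal_injective key
  have hG : Real.Gamma (p+q) ≠ 0 := (Real.Gamma_pos_of_pos (by linarith)).ne'
  field_simp
  linarith [this]

lemma betaT_eqOn {p q T : ℝ} (hT : 0 < T) :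
    ∀ t ∈ Ioc (0:ℝ) T, t ^ (p-1) * (T-t) ^ (q-1)
      = T ^ (p-1) * T ^ (q-1) * ((t/T) ^ (p-1) * (1-t/T) ^ (q-1)) := by
  intro t ht
  have h1 : t ^ (p-1) = T ^ (p-1) * (t/T) ^ (p-1) := by
    rw [← Real.mul_rpow hT.le (div_nonneg ht.1.le hT.le), mul_div_cancel₀ _ hT.ne']
  have h2 : (T - t) ^ (q-1) = T ^ (q-1) * (1 - t/T) ^ (q-1) := by
    rw [← Real.mul_rpow hT.le (by
      rw [sub_nonneg, div_le_one hT]; exact ht.2)]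
    rw [mul_sub, mul_one, mul_div_cancel₀ _ hT.ne']
  rw [h1, h2]; ring

lemma betaT_integrableOn {p q T : ℝ} (hp : 0 < p) (hq : 0 < q) (hT : 0 < T) :
    IntegrableOn (fun t : ℝ => t ^ (p-1) * (T-t) ^ (q-1)) (Ioc 0 T) := by
  have h0 : IntervalIntegrable (fun x : ℝ => x ^ (p-1) * (1-x) ^ (q-1)) volume 0 1 := by
    rw [intervalIntegrable_iff_integrableOn_Ioc_of_le zero_le_one]
    exact betaR_integrableOn hp hq
  have h1 := h0.comp_mul_left (c := T⁻¹)
  rw [zero_div, one_div, inv_inv,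
    intervalIntegrable_iff_integrableOn_Ioc_of_le hT.le] at h1
  have h2 := (h1.const_mul (T ^ (p-1) * T ^ (q-1)))
  refine h2.congr ?_
  filter_upwards [ae_restrict_mem measurableSet_Ioc] with t ht
  rw [betaT_eqOn hT t ht, inv_mul_eq_div]

lemma betaT_value {p q T : ℝ} (hp : 0 < p) (hq : 0 < q) (hT : 0 < T) :
    ∫ t in Ioc (0:ℝ) T, t ^ (p-1) * (T-t) ^ (q-1)
      = T ^ (p+q-1) * (Real.Gamma p * Real.Gamma q / Real.Gamma (p+q)) := by
  rw [setIntegral_congr_fun measurableSet_Ioc (betaT_eqOn hT)]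
  rw [integral_const_mul]
  have : ∫ t in Ioc (0:ℝ) T, (t/T) ^ (p-1) * (1-t/T) ^ (q-1)
      = ∫ t in (0:ℝ)..T, (t/T) ^ (p-1) * (1-t/T) ^ (q-1) :=
    (intervalIntegral.integral_of_le hT.le).symm
  rw [this, intervalIntegral.integral_comp_div
      (f := fun u : ℝ => u ^ (p-1) * (1-u) ^ (q-1)) hT.ne',
    zero_div, div_self hT.ne', intervalIntegral.integral_of_le zero_le_one,
    betaR_value hp hq, smul_eq_mul]
  rw [show T ^ (p-1) * T ^ (q-1) * (T * (Real.Gamma p * Real.Gamma q / Real.Gamma (p+q)))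
      = (T ^ (p-1) * T ^ (q-1) * T ^ (1:ℝ)) * (Real.Gamma p * Real.Gamma q / Real.Gamma (p+q))
    by rw [Real.rpow_one]; ring]
  rw [← Real.rpow_add hT, ← Real.rpow_add hT]
  ring_nf

lemma betaT_lint {p q T : ℝ} (hp : 0 < p) (hq : 0 < q) (hT : 0 < T) :
    ∫⁻ t in Ioo (0:ℝ) T, ENNReal.ofReal (t ^ (p-1) * (T-t) ^ (q-1))
      = ENNReal.ofReal (T ^ (p+q-1) * (Real.Gamma p * Real.Gamma q / Real.Gamma (p+q))) := by
  rw [Measure.restrict_congr_set Ioo_ae_eq_Ioc]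
  rw [← ofReal_integral_eq_lintegral_ofReal (betaT_integrableOn hp hq hT) ?_]
  · rw [betaT_value hp hq hT]
  · filter_upwards [ae_restrict_mem measurableSet_Ioc] with t ht
    exact mul_nonneg (Real.rpow_nonneg ht.1.le _)
      (Real.rpow_nonneg (by linarith [ht.2]) _)

noncomputable def mono3 (p q r s : ℝ) : (Fin 3 → ℝ) → ℝ := fun x =>
  x 0 ^ (p-1) * x 1 ^ (q-1) * x 2 ^ (r-1) * (1 - x 0 - x 1 - x 2) ^ (s-1)

lemma measurableSet_simplex3 : MeasurableSet simplex3 := by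
  have : simplex3 = {x : Fin 3 → ℝ | 0 ≤ x 0} ∩ ({x | 0 ≤ x 1} ∩ ({x | 0 ≤ x 2}
      ∩ {x | x 0 + x 1 + x 2 ≤ 1})) := rfl
  rw [this]
  exact (measurableSet_le measurable_const (measurable_pi_apply 0)).inter
    ((measurableSet_le measurable_const (measurable_pi_apply 1)).inter
    ((measurableSet_le measurable_const (measurable_pi_apply 2)).inter
    (measurableSet_le (((measurable_pi_apply 0).add (measurable_pi_apply 1)).add
      (measurable_pi_apply 2)) measurable_const)))

lemma measurable_mono3 (p q r s : ℝ) : Measurable (mono3 p q r s) := by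
  unfold mono3; fun_prop

open Classical in
lemma mono3_lint {p q r s : ℝ} (hp : 0 < p) (hq : 0 < q) (hr : 0 < r) (hs : 0 < s) :
    ∫⁻ x : Fin 3 → ℝ, ENNReal.ofReal (simplex3.indicator (mono3 p q r s) x)
      = ENNReal.ofReal (Real.Gamma p * Real.Gamma q * Real.Gamma r * Real.Gamma s
          / Real.Gamma (p+q+r+s)) := by
  have hGrs : 0 < Real.Gamma r * Real.Gamma s / Real.Gamma (r+s) :=
    div_pos (mul_pos (Real.Gamma_pos_of_pos hr) (Real.Gamma_pos_of_pos hs))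
      (Real.Gamma_pos_of_pos (by linarith))
  have hGq : 0 < Real.Gamma q * Real.Gamma (r+s) / Real.Gamma (q+(r+s)) :=
    div_pos (mul_pos (Real.Gamma_pos_of_pos hq) (Real.Gamma_pos_of_pos (by linarith)))
      (Real.Gamma_pos_of_pos (by linarith))
  -- the function on ℝ × ℝ × ℝ
  set m : ℝ → ℝ → ℝ → ℝ := fun a b c =>
    a ^ (p-1) * b ^ (q-1) * c ^ (r-1) * (1-a-b-c) ^ (s-1) with hm
  set G : ℝ × ℝ × ℝ → ℝ≥0∞ := fun v =>
    ENNReal.ofReal (if 0 ≤ v.1 ∧ 0 ≤ v.2.1 ∧ 0 ≤ v.2.2 ∧ v.1 + v.2.1 + v.2.2 ≤ 1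
      then m v.1 v.2.1 v.2.2 else 0) with hG
  have hS : MeasurableSet {v : ℝ × ℝ × ℝ |
      0 ≤ v.1 ∧ 0 ≤ v.2.1 ∧ 0 ≤ v.2.2 ∧ v.1 + v.2.1 + v.2.2 ≤ 1} := by
    refine (measurableSet_le measurable_const measurable_fst).inter
      ((measurableSet_le measurable_const (measurable_fst.comp measurable_snd)).inter
      ((measurableSet_le measurable_const (measurable_snd.comp measurable_snd)).inter
      (measurableSet_le ((measurable_fst.add (measurable_fst.comp measurable_snd)).add
        (measurable_snd.comp measurable_snd)) measurable_const)))
  have hmmeas : Measurable (fun v : ℝ × ℝ × ℝ => m v.1 v.2.1 v.2.2) := by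
    simp only [hm]; fun_prop
  have hGmeas : Measurable G := by
    have : G = fun v => ENNReal.ofReal
        (Set.indicator {v : ℝ × ℝ × ℝ | 0 ≤ v.1 ∧ 0 ≤ v.2.1 ∧ 0 ≤ v.2.2 ∧
          v.1 + v.2.1 + v.2.2 ≤ 1} (fun v => m v.1 v.2.1 v.2.2) v) := by
      funext v; rw [hG]; simp [Set.indicator_apply]
    rw [this]
    exact (hmmeas.indicator hS).ennreal_ofReal
  -- transfer to ℝ × ℝ × ℝ
  have step1 : ∫⁻ x : Fin 3 → ℝ, ENNReal.ofReal (simplex3.indicator (mono3 p q r s) x)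
      = ∫⁻ v : ℝ × ℝ × ℝ, G v := by
    set e := (MeasurableEquiv.piFinSuccAbove (fun _ : Fin 3 => ℝ) 0).trans
      ((MeasurableEquiv.refl ℝ).prodCongr (MeasurableEquiv.finTwoArrow)) with hedef
    have hpres : MeasurePreserving e := by
      show MeasurePreserving ((Prod.map id ⇑(MeasurableEquiv.finTwoArrow (α := ℝ))) ∘
        ⇑(MeasurableEquiv.piFinSuccAbove (fun _ : Fin 3 => ℝ) 0)) volume volume
      exact ((MeasurePreserving.id volume).prod (volume_preserving_finTwoArrow ℝ)).comp
        (volume_preserving_piFinSuccAbove (fun _ : Fin 3 => ℝ) 0)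
    have he : ∀ x : Fin 3 → ℝ, e x = (x 0, (x 1, x 2)) := fun x => rfl
    have hptw : ∀ x : Fin 3 → ℝ,
        ENNReal.ofReal (simplex3.indicator (mono3 p q r s) x) = G (e x) := by
      intro x
      rw [he x, hG]
      simp only [Set.indicator_apply]
      by_cases hx : 0 ≤ x 0 ∧ 0 ≤ x 1 ∧ 0 ≤ x 2 ∧ x 0 + x 1 + x 2 ≤ 1
      · rw [if_pos (show x ∈ simplex3 from hx), if_pos hx]; rfl
      · rw [if_neg (show ¬ x ∈ simplex3 from hx), if_neg hx]
    rw [lintegral_congr hptw]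
    exact hpres.lintegral_comp hGmeas
  rw [step1]
  -- innermost integral
  set J1 : ℝ → ℝ → ℝ≥0∞ := fun a b =>
    if 0 ≤ a ∧ 0 ≤ b ∧ a + b < 1 then
      ENNReal.ofReal (a ^ (p-1) * b ^ (q-1) *
        ((1-a-b) ^ (r+s-1) * (Real.Gamma r * Real.Gamma s / Real.Gamma (r+s)))) else 0
    with hJ1
  have inner : ∀ a b : ℝ, ∫⁻ c : ℝ, G (a, (b, c)) = J1 a b := by
    intro a b
    by_cases hab : 0 ≤ a ∧ 0 ≤ b
    swap
    · have : ∀ c : ℝ, G (a, (b, c)) = 0 := by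
        intro c; simp only [hG]
        rw [if_neg (by tauto), ENNReal.ofReal_zero]
      simp only [this, lintegral_const, zero_mul, hJ1]
      rw [eq_comm, if_neg (by tauto)]
    obtain ⟨ha, hb⟩ := hab
    have hK : 0 ≤ a ^ (p-1) * b ^ (q-1) :=
      mul_nonneg (Real.rpow_nonneg ha _) (Real.rpow_nonneg hb _)
    have hfun : (fun c : ℝ => G (a, (b, c))) = (Icc 0 (1-a-b)).indicator
        (fun c => ENNReal.ofReal (a ^ (p-1) * b ^ (q-1) *
          (c ^ (r-1) * ((1-a-b) - c) ^ (s-1)))) := by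
      funext c
      simp only [hG, Set.indicator_apply]
      simp only [mem_Icc]
      by_cases hc : 0 ≤ c ∧ c ≤ 1 - a - b
      · rw [if_pos ⟨ha, hb, hc.1, by linarith [hc.2]⟩, if_pos hc, hm]
        congr 1
        have h4 : (1:ℝ) - a - b - c = (1 - a - b) - c := by ring
        rw [h4]; ring
      · rw [if_neg (by
            intro h
            exact hc ⟨h.2.2.1, by linarith [h.2.2.2]⟩), if_neg hc, ENNReal.ofReal_zero]
    rw [hfun, lintegral_indicator measurableSet_Icc]
    by_cases hT : 0 < 1 - a - b
    · rw [← Measure.restrict_congr_set Ioo_ae_eq_Icc]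
      simp_rw [ENNReal.ofReal_mul hK]
      rw [lintegral_const_mul' _ _ ENNReal.ofReal_ne_top, betaT_lint hr hs hT,
        ← ENNReal.ofReal_mul hK]
      simp only [hJ1]
      rw [eq_comm, if_pos ⟨ha, hb, by linarith⟩]
    · rw [setLIntegral_measure_zero _ _ (by
        rw [Real.volume_Icc]
        exact ENNReal.ofReal_eq_zero.2 (by linarith))]
      simp only [hJ1]
      rw [eq_comm, if_neg (by intro h; exact hT (by linarith [h.2.2]))]
  -- middle integral
  set J2 : ℝ → ℝ≥0∞ := fun a =>
    if 0 ≤ a ∧ a < 1 then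
      ENNReal.ofReal ((a ^ (p-1) * (Real.Gamma r * Real.Gamma s / Real.Gamma (r+s))) *
        ((1-a) ^ (q+(r+s)-1) *
          (Real.Gamma q * Real.Gamma (r+s) / Real.Gamma (q+(r+s))))) else 0
    with hJ2
  have mid : ∀ a : ℝ, ∫⁻ b : ℝ, J1 a b = J2 a := by
    intro a
    by_cases ha : 0 ≤ a
    swap
    · have : ∀ b : ℝ, J1 a b = 0 := by
        intro b; rw [hJ1]; exact if_neg (by tauto)
      simp only [this, lintegral_const, zero_mul, hJ2]
      rw [eq_comm, if_neg (by tauto)]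
    have hK : 0 ≤ a ^ (p-1) * (Real.Gamma r * Real.Gamma s / Real.Gamma (r+s)) :=
      mul_nonneg (Real.rpow_nonneg ha _) hGrs.le
    have hfun : (fun b : ℝ => J1 a b) = (Ico 0 (1-a)).indicator
        (fun b => ENNReal.ofReal ((a ^ (p-1) *
          (Real.Gamma r * Real.Gamma s / Real.Gamma (r+s))) *
          (b ^ (q-1) * ((1-a) - b) ^ ((r+s)-1)))) := by
      funext b
      simp only [hJ1, Set.indicator_apply]
      simp only [mem_Ico]
      by_cases hb : 0 ≤ b ∧ b < 1 - a
      · rw [if_pos ⟨ha, hb.1, by linarith [hb.2]⟩, if_pos hb]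
        congr 1
        have h4 : (1:ℝ) - a - b = (1 - a) - b := by ring
        have h5 : r + s - 1 = (r+s) - 1 := by ring
        rw [h4, h5]; ring
      · rw [if_neg (by
            intro h
            exact hb ⟨h.2.1, by linarith [h.2.2]⟩), if_neg hb]
    rw [hfun, lintegral_indicator measurableSet_Ico]
    by_cases hT : 0 < 1 - a
    · rw [← Measure.restrict_congr_set Ioo_ae_eq_Ico]
      simp_rw [ENNReal.ofReal_mul hK]
      rw [lintegral_const_mul' _ _ ENNReal.ofReal_ne_top,
        betaT_lint hq (by linarith : (0:ℝ) < r + s) hT,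
        ← ENNReal.ofReal_mul hK]
      simp only [hJ2]
      rw [eq_comm, if_pos ⟨ha, by linarith⟩]
    · rw [setLIntegral_measure_zero _ _ (by
        rw [Real.volume_Ico]
        exact ENNReal.ofReal_eq_zero.2 (by linarith))]
      simp only [hJ2]
      rw [eq_comm, if_neg (by intro h; exact hT (by linarith [h.2]))]
  -- top integral
  have hfun : (fun a : ℝ => J2 a) = (Ico 0 1).indicator
      (fun a => ENNReal.ofReal (((Real.Gamma r * Real.Gamma s / Real.Gamma (r+s)) *
        (Real.Gamma q * Real.Gamma (r+s) / Real.Gamma (q+(r+s)))) *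
        (a ^ (p-1) * ((1:ℝ) - a) ^ ((q+(r+s))-1)))) := by
    funext a
    simp only [hJ2, Set.indicator_apply]
    simp only [mem_Ico]
    by_cases ha : 0 ≤ a ∧ a < 1
    · rw [if_pos ha, if_pos ha]
      congr 1
      ring
    · rw [if_neg ha, if_neg ha]
  have hC2 : 0 ≤ (Real.Gamma r * Real.Gamma s / Real.Gamma (r+s)) *
      (Real.Gamma q * Real.Gamma (r+s) / Real.Gamma (q+(r+s))) :=
    mul_nonneg hGrs.le hGq.le
  have top : ∫⁻ a : ℝ, J2 a
      = ENNReal.ofReal (Real.Gamma p * Real.Gamma q * Real.Gamma r * Real.Gamma s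
          / Real.Gamma (p+q+r+s)) := by
    rw [hfun, lintegral_indicator measurableSet_Ico,
      ← Measure.restrict_congr_set Ioo_ae_eq_Ico]
    simp_rw [ENNReal.ofReal_mul hC2]
    rw [lintegral_const_mul' _ _ ENNReal.ofReal_ne_top,
      betaT_lint hp (by linarith : (0:ℝ) < q + (r+s)) one_pos,
      ← ENNReal.ofReal_mul hC2]
    congr 1
    rw [Real.one_rpow]
    have e1 : p + (q + (r+s)) = p+q+r+s := by ring
    rw [e1]
    have h1 : Real.Gamma (r+s) ≠ 0 := (Real.Gamma_pos_of_pos (by linarith)).ne'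
    have h2 : Real.Gamma (q+(r+s)) ≠ 0 := (Real.Gamma_pos_of_pos (by linarith)).ne'
    have h3 : Real.Gamma (p+q+r+s) ≠ 0 := (Real.Gamma_pos_of_pos (by linarith)).ne'
    field_simp
  -- put it together
  rw [Measure.volume_eq_prod, lintegral_prod _ hGmeas.aemeasurable]
  have : ∀ a : ℝ, ∫⁻ bc : ℝ × ℝ, G (a, bc) = J2 a := by
    intro a
    rw [Measure.volume_eq_prod,
      lintegral_prod (fun bc => G (a, bc))
        ((hGmeas.comp measurable_prodMk_left).aemeasurable)]
    rw [lintegral_congr (fun b => inner a b)]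
    exact mid a
  rw [lintegral_congr this]
  exact top

lemma mono3_indicator_nonneg {p q r s : ℝ} :
    ∀ x, 0 ≤ simplex3.indicator (mono3 p q r s) x := by
  intro x
  apply Set.indicator_nonneg
  intro y hy
  obtain ⟨h0, h1, h2, h3⟩ := hy
  have h4 : (0:ℝ) ≤ 1 - y 0 - y 1 - y 2 := by linarith
  exact mul_nonneg (mul_nonneg (mul_nonneg (Real.rpow_nonneg h0 _)
    (Real.rpow_nonneg h1 _)) (Real.rpow_nonneg h2 _)) (Real.rpow_nonneg h4 _)

lemma mono3_integrableOn {p q r s : ℝ} (hp : 0 < p) (hq : 0 < q) (hr : 0 < r) (hs : 0 < s) :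
    IntegrableOn (mono3 p q r s) simplex3 := by
  rw [← integrable_indicator_iff measurableSet_simplex3]
  constructor
  · exact ((measurable_mono3 p q r s).indicator measurableSet_simplex3).aestronglyMeasurable
  · rw [hasFiniteIntegral_iff_norm]
    have : ∀ x, ENNReal.ofReal ‖simplex3.indicator (mono3 p q r s) x‖
        = ENNReal.ofReal (simplex3.indicator (mono3 p q r s) x) := by
      intro x
      rw [Real.norm_of_nonneg (mono3_indicator_nonneg x)]
    simp_rw [this]
    rw [mono3_lint hp hq hr hs]
    exact ENNReal.ofReal_lt_top

lemma mono3_integral {p q r s : ℝ} (hp : 0 < p) (hq : 0 < q) (hr : 0 < r) (hs : 0 < s) :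
    ∫ x in simplex3, mono3 p q r s x
      = Real.Gamma p * Real.Gamma q * Real.Gamma r * Real.Gamma s / Real.Gamma (p+q+r+s) := by
  have hInt : Integrable (simplex3.indicator (mono3 p q r s)) :=
    (integrable_indicator_iff measurableSet_simplex3).2 (mono3_integrableOn hp hq hr hs)
  have key := ofReal_integral_eq_lintegral_ofReal hInt
    (Filter.Eventually.of_forall mono3_indicator_nonneg)
  rw [mono3_lint hp hq hr hs] at key
  have h1 : 0 ≤ ∫ x, simplex3.indicator (mono3 p q r s) x :=
    integral_nonneg mono3_indicator_nonneg
  have h2 : 0 ≤ Real.Gamma p * Real.Gamma q * Real.Gamma r * Real.Gamma s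
      / Real.Gamma (p+q+r+s) := by
    have := Real.Gamma_pos_of_pos hp
    have := Real.Gamma_pos_of_pos hq
    have := Real.Gamma_pos_of_pos hr
    have := Real.Gamma_pos_of_pos hs
    have := Real.Gamma_pos_of_pos (show (0:ℝ) < p+q+r+s by linarith)
    positivity
  rw [← integral_indicator measurableSet_simplex3]
  exact (ENNReal.ofReal_eq_ofReal_iff h1 h2).1 key

lemma merge {γ x : ℝ} (hγ : 0 < γ) (hx : 0 ≤ x) (n : ℕ) :
    x ^ (γ + n - 1) = x ^ n * x ^ (γ - 1) := by
  rcases hx.eq_or_lt with h | h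
  · subst h
    cases n with
    | zero => simp
    | succ k =>
      rw [Real.zero_rpow (by push_cast; linarith : γ + ((k:ℕ)+1 : ℕ) - 1 ≠ 0),
        zero_pow (Nat.succ_ne_zero k), zero_mul]
  · rw [← Real.rpow_natCast x n, ← Real.rpow_add h]
    congr 1
    ring

lemma mono3_eq {γ : ℝ} (hγ : 0 < γ) (n1 n2 n3 n4 : ℕ) {x : Fin 3 → ℝ} (hx : x ∈ simplex3) :
    mono3 (γ+n1) (γ+n2) (γ+n3) (γ+n4) x
      = (x 0)^n1 * (x 1)^n2 * (x 2)^n3 * (1 - x 0 - x 1 - x 2)^n4 *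
        ((x 0)^(γ-1) * (x 1)^(γ-1) * (x 2)^(γ-1) * (1 - x 0 - x 1 - x 2)^(γ-1)) := by
  obtain ⟨h0, h1, h2, h3⟩ := hx
  have h4 : (0:ℝ) ≤ 1 - x 0 - x 1 - x 2 := by linarith
  unfold mono3
  rw [merge hγ h0 n1, merge hγ h1 n2, merge hγ h2 n3, merge hγ h4 n4]
  ring

lemma split4 {f m1 m2 m3 m4 : (Fin 3 → ℝ) → ℝ} {c1 c2 c3 c4 v1 v2 v3 v4 : ℝ}
    (hpt : ∀ x ∈ simplex3, f x = c1 * m1 x + c2 * m2 x - c3 * m3 x - c4 * m4 x)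
    (h1 : IntegrableOn m1 simplex3) (h2 : IntegrableOn m2 simplex3)
    (h3 : IntegrableOn m3 simplex3) (h4 : IntegrableOn m4 simplex3)
    (hv1 : ∫ x in simplex3, m1 x = v1) (hv2 : ∫ x in simplex3, m2 x = v2)
    (hv3 : ∫ x in simplex3, m3 x = v3) (hv4 : ∫ x in simplex3, m4 x = v4) :
    ∫ x in simplex3, f x = c1*v1 + c2*v2 - c3*v3 - c4*v4 := by
  rw [setIntegral_congr_fun measurableSet_simplex3 (fun x hx => hpt x hx)]
  have i1 : IntegrableOn (fun x => c1 * m1 x) simplex3 := h1.const_mul c1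
  have i2 : IntegrableOn (fun x => c2 * m2 x) simplex3 := h2.const_mul c2
  have i3 : IntegrableOn (fun x => c3 * m3 x) simplex3 := h3.const_mul c3
  have i4 : IntegrableOn (fun x => c4 * m4 x) simplex3 := h4.const_mul c4
  have i12 : IntegrableOn (fun x => c1 * m1 x + c2 * m2 x) simplex3 := i1.add i2
  have i123 : IntegrableOn (fun x => c1 * m1 x + c2 * m2 x - c3 * m3 x) simplex3 := i12.sub i3
  rw [integral_sub i123 i4, integral_sub i12 i3, integral_add i1 i2,
    integral_const_mul, integral_const_mul, integral_const_mul, integral_const_mul,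
    hv1, hv2, hv3, hv4]

/-- The diagonal, anti-diagonal, and off-diagonal moments `s_γ, z_γ, t_γ` of `ψ₁₂` against
the quadratic products `λ₁λ₂, λ₃λ₄, λ₁λ₃` with respect to the Dirichlet density `Ω^{(γ)}`. -/
theorem psi12_moments (γ : ℝ) (hγ : 0 < γ) :
    (∫ x in simplex3, psi12 γ x * (lam 0 x * lam 1 x) * dirichlet3 γ x =
        γ * (5 * γ ^ 2 + 5 * γ + 1) /
          (8 * (1 + 2 * γ) ^ 2 * (1 + 4 * γ) ^ 2 * (3 + 4 * γ))) ∧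
      (∫ x in simplex3, psi12 γ x * (lam 2 x * lam 3 x) * dirichlet3 γ x =
        γ ^ 3 / (8 * (1 + 2 * γ) ^ 2 * (1 + 4 * γ) ^ 2 * (3 + 4 * γ))) ∧
      (∫ x in simplex3, psi12 γ x * (lam 0 x * lam 2 x) * dirichlet3 γ x =
        -(γ ^ 2) / (16 * (1 + 2 * γ) * (1 + 4 * γ) ^ 2 * (3 + 4 * γ))) := by
  have hγ1 : (0:ℝ) < γ + 1 := by linarith
  have hγ2 : (0:ℝ) < γ + 2 := by linarith
  have hGne : Real.Gamma γ ≠ 0 := (Real.Gamma_pos_of_pos hγ).ne'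
  have hDne : Real.Gamma (4*γ) ≠ 0 := (Real.Gamma_pos_of_pos (by linarith)).ne'
  have hG1 : Real.Gamma (γ+1) = γ * Real.Gamma γ := Real.Gamma_add_one hγ.ne'
  have hG2 : Real.Gamma (γ+2) = (γ+1) * (γ * Real.Gamma γ) := by
    rw [show γ+(2:ℝ) = (γ+1)+1 by ring, Real.Gamma_add_one (by linarith), hG1]
  have hD1 : Real.Gamma (4*γ+1) = (4*γ) * Real.Gamma (4*γ) :=
    Real.Gamma_add_one (by positivity)
  have hD2 : Real.Gamma (4*γ+2) = (4*γ+1) * ((4*γ) * Real.Gamma (4*γ)) := by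
    rw [show 4*γ+(2:ℝ) = (4*γ+1)+1 by ring, Real.Gamma_add_one (by positivity), hD1]
  have hD3 : Real.Gamma (4*γ+3) = (4*γ+2) * ((4*γ+1) * ((4*γ) * Real.Gamma (4*γ))) := by
    rw [show 4*γ+(3:ℝ) = (4*γ+2)+1 by ring, Real.Gamma_add_one (by positivity), hD2]
  have hD4 : Real.Gamma (4*γ+4)
      = (4*γ+3) * ((4*γ+2) * ((4*γ+1) * ((4*γ) * Real.Gamma (4*γ)))) := by
    rw [show 4*γ+(4:ℝ) = (4*γ+3)+1 by ring, Real.Gamma_add_one (by positivity), hD3]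
  have hne1 : (2*γ+1 : ℝ) ≠ 0 := by positivity
  have hne2 : (4*γ+1 : ℝ) ≠ 0 := by positivity
  have hne3 : (4*γ+2 : ℝ) ≠ 0 := by positivity
  have hne4 : (4*γ+3 : ℝ) ≠ 0 := by positivity
  have hne5 : (4*γ : ℝ) ≠ 0 := by positivity
  have hne6 : (1+2*γ : ℝ) ≠ 0 := by positivity
  have hne7 : (1+4*γ : ℝ) ≠ 0 := by positivity
  have hne8 : (3+4*γ : ℝ) ≠ 0 := by positivity
  refine ⟨?_, ?_, ?_⟩
  · -- s_γ
    have key : ∀ x ∈ simplex3, psi12 γ x * (lam 0 x * lam 1 x) * dirichlet3 γ x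
        = (Real.Gamma (4*γ) / Real.Gamma γ ^ 4) * mono3 (γ+2) (γ+2) γ γ x
          + ((Real.Gamma (4*γ) / Real.Gamma γ ^ 4) * (γ^2/(2*(2*γ+1)*(4*γ+1))))
              * mono3 (γ+1) (γ+1) γ γ x
          - ((Real.Gamma (4*γ) / Real.Gamma γ ^ 4) * (γ/(2*(2*γ+1))))
              * mono3 (γ+2) (γ+1) γ γ x
          - ((Real.Gamma (4*γ) / Real.Gamma γ ^ 4) * (γ/(2*(2*γ+1))))
              * mono3 (γ+1) (γ+2) γ γ x := by
      intro x hx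
      obtain ⟨h0, h1, h2, h3⟩ := hx
      have h4 : (0:ℝ) ≤ 1 - x 0 - x 1 - x 2 := by linarith
      have e1 := mono3_eq hγ 2 2 0 0 ⟨h0, h1, h2, h3⟩
      have e2 := mono3_eq hγ 1 1 0 0 ⟨h0, h1, h2, h3⟩
      have e3 := mono3_eq hγ 2 1 0 0 ⟨h0, h1, h2, h3⟩
      have e4 := mono3_eq hγ 1 2 0 0 ⟨h0, h1, h2, h3⟩
      push_cast at e1 e2 e3 e4
      simp only [add_zero, pow_zero, pow_one, mul_one] at e1 e2 e3 e4
      simp only [psi12, dirichlet3]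
      rw [show lam 0 x = x 0 from rfl, show lam 1 x = x 1 from rfl,
        show lam 2 x = x 2 from rfl, show lam 3 x = 1 - x 0 - x 1 - x 2 from rfl]
      rw [Real.mul_rpow (mul_nonneg (mul_nonneg h0 h1) h2) h4,
        Real.mul_rpow (mul_nonneg h0 h1) h2, Real.mul_rpow h0 h1]
      rw [e1, e2, e3, e4]
      ring
    rw [split4 key
      (mono3_integrableOn hγ2 hγ2 hγ hγ) (mono3_integrableOn hγ1 hγ1 hγ hγ)
      (mono3_integrableOn hγ2 hγ1 hγ hγ) (mono3_integrableOn hγ1 hγ2 hγ hγ)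
      (mono3_integral hγ2 hγ2 hγ hγ) (mono3_integral hγ1 hγ1 hγ hγ)
      (mono3_integral hγ2 hγ1 hγ hγ) (mono3_integral hγ1 hγ2 hγ hγ)]
    rw [show γ+2+(γ+2)+γ+γ = 4*γ+4 by ring, show γ+1+(γ+1)+γ+γ = 4*γ+2 by ring,
      show γ+2+(γ+1)+γ+γ = 4*γ+3 by ring, show γ+1+(γ+2)+γ+γ = 4*γ+3 by ring]
    rw [hG2, hG1, hD4, hD3, hD2]
    field_simp
    ring
  · -- z_γ
    have key : ∀ x ∈ simplex3, psi12 γ x * (lam 2 x * lam 3 x) * dirichlet3 γ x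
        = (Real.Gamma (4*γ) / Real.Gamma γ ^ 4) * mono3 (γ+1) (γ+1) (γ+1) (γ+1) x
          + ((Real.Gamma (4*γ) / Real.Gamma γ ^ 4) * (γ^2/(2*(2*γ+1)*(4*γ+1))))
              * mono3 γ γ (γ+1) (γ+1) x
          - ((Real.Gamma (4*γ) / Real.Gamma γ ^ 4) * (γ/(2*(2*γ+1))))
              * mono3 (γ+1) γ (γ+1) (γ+1) x
          - ((Real.Gamma (4*γ) / Real.Gamma γ ^ 4) * (γ/(2*(2*γ+1))))
              * mono3 γ (γ+1) (γ+1) (γ+1) x := by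
      intro x hx
      obtain ⟨h0, h1, h2, h3⟩ := hx
      have h4 : (0:ℝ) ≤ 1 - x 0 - x 1 - x 2 := by linarith
      have e1 := mono3_eq hγ 1 1 1 1 ⟨h0, h1, h2, h3⟩
      have e2 := mono3_eq hγ 0 0 1 1 ⟨h0, h1, h2, h3⟩
      have e3 := mono3_eq hγ 1 0 1 1 ⟨h0, h1, h2, h3⟩
      have e4 := mono3_eq hγ 0 1 1 1 ⟨h0, h1, h2, h3⟩
      push_cast at e1 e2 e3 e4
      simp only [add_zero, pow_zero, pow_one, mul_one, one_mul] at e1 e2 e3 e4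
      simp only [psi12, dirichlet3]
      rw [show lam 0 x = x 0 from rfl, show lam 1 x = x 1 from rfl,
        show lam 2 x = x 2 from rfl, show lam 3 x = 1 - x 0 - x 1 - x 2 from rfl]
      rw [Real.mul_rpow (mul_nonneg (mul_nonneg h0 h1) h2) h4,
        Real.mul_rpow (mul_nonneg h0 h1) h2, Real.mul_rpow h0 h1]
      rw [e1, e2, e3, e4]
      ring
    rw [split4 key
      (mono3_integrableOn hγ1 hγ1 hγ1 hγ1) (mono3_integrableOn hγ hγ hγ1 hγ1)
      (mono3_integrableOn hγ1 hγ hγ1 hγ1) (mono3_integrableOn hγ hγ1 hγ1 hγ1)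
      (mono3_integral hγ1 hγ1 hγ1 hγ1) (mono3_integral hγ hγ hγ1 hγ1)
      (mono3_integral hγ1 hγ hγ1 hγ1) (mono3_integral hγ hγ1 hγ1 hγ1)]
    rw [show γ+1+(γ+1)+(γ+1)+(γ+1) = 4*γ+4 by ring, show γ+γ+(γ+1)+(γ+1) = 4*γ+2 by ring,
      show γ+1+γ+(γ+1)+(γ+1) = 4*γ+3 by ring, show γ+(γ+1)+(γ+1)+(γ+1) = 4*γ+3 by ring]
    rw [hG1, hD4, hD3, hD2]
    field_simp
    ring
  · -- t_γ
    have key : ∀ x ∈ simplex3, psi12 γ x * (lam 0 x * lam 2 x) * dirichlet3 γ x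
        = (Real.Gamma (4*γ) / Real.Gamma γ ^ 4) * mono3 (γ+2) (γ+1) (γ+1) γ x
          + ((Real.Gamma (4*γ) / Real.Gamma γ ^ 4) * (γ^2/(2*(2*γ+1)*(4*γ+1))))
              * mono3 (γ+1) γ (γ+1) γ x
          - ((Real.Gamma (4*γ) / Real.Gamma γ ^ 4) * (γ/(2*(2*γ+1))))
              * mono3 (γ+2) γ (γ+1) γ x
          - ((Real.Gamma (4*γ) / Real.Gamma γ ^ 4) * (γ/(2*(2*γ+1))))
              * mono3 (γ+1) (γ+1) (γ+1) γ x := by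
      intro x hx
      obtain ⟨h0, h1, h2, h3⟩ := hx
      have h4 : (0:ℝ) ≤ 1 - x 0 - x 1 - x 2 := by linarith
      have e1 := mono3_eq hγ 2 1 1 0 ⟨h0, h1, h2, h3⟩
      have e2 := mono3_eq hγ 1 0 1 0 ⟨h0, h1, h2, h3⟩
      have e3 := mono3_eq hγ 2 0 1 0 ⟨h0, h1, h2, h3⟩
      have e4 := mono3_eq hγ 1 1 1 0 ⟨h0, h1, h2, h3⟩
      push_cast at e1 e2 e3 e4
      simp only [add_zero, pow_zero, pow_one, mul_one, one_mul] at e1 e2 e3 e4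
      simp only [psi12, dirichlet3]
      rw [show lam 0 x = x 0 from rfl, show lam 1 x = x 1 from rfl,
        show lam 2 x = x 2 from rfl, show lam 3 x = 1 - x 0 - x 1 - x 2 from rfl]
      rw [Real.mul_rpow (mul_nonneg (mul_nonneg h0 h1) h2) h4,
        Real.mul_rpow (mul_nonneg h0 h1) h2, Real.mul_rpow h0 h1]
      rw [e1, e2, e3, e4]
      ring
    rw [split4 key
      (mono3_integrableOn hγ2 hγ1 hγ1 hγ) (mono3_integrableOn hγ1 hγ hγ1 hγ)
      (mono3_integrableOn hγ2 hγ hγ1 hγ) (mono3_integrableOn hγ1 hγ1 hγ1 hγ)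
      (mono3_integral hγ2 hγ1 hγ1 hγ) (mono3_integral hγ1 hγ hγ1 hγ)
      (mono3_integral hγ2 hγ hγ1 hγ) (mono3_integral hγ1 hγ1 hγ1 hγ)]
    rw [show γ+2+(γ+1)+(γ+1)+γ = 4*γ+4 by ring, show γ+1+γ+(γ+1)+γ = 4*γ+2 by ring,
      show γ+2+γ+(γ+1)+γ = 4*γ+3 by ring, show γ+1+(γ+1)+(γ+1)+γ = 4*γ+3 by ring]
    rw [hG2, hG1, hD4, hD3, hD2]
    field_simp
    ring

end
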